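/- Let G be a locally compact abelian topological group with a Haar measure μ and let f ∈ L¹(G, μ). Then the map φ ↦ ∫_G f(x)·φ(x) dμ(x), defined on COS(G) regarded as a subspace of C(G, ℂ) with the compact-open topology (the topology of uniform convergence on compact sets), is continuous. (Consequently the bijection β_G from the structure space Δ(L¹(G), ⋆_c) with the weak-* topology onto (COS(G), τ_ucc) is an open map.) -/

import Mathlib

open MeasureTheory Filter Topology Set ENNReal


lemma cos_norm_le_one {G : Type*} [AddCommGroup G] (φ : G → ℂ)
    (hb : ∃ C, ∀ x, ‖φ x‖ ≤ C) (hne : φ ≠ 0)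
    (hd : ∀ x y, φ x * φ y = (φ (x + y) + φ (x - y)) / 2) :
    ∀ x, ‖φ x‖ ≤ 1 := by
  obtain ⟨C, hC⟩ := hb
  -- φ 0 = 1
  obtain ⟨x₀, hx₀⟩ : ∃ x, φ x ≠ 0 := by
    by_contra h
    push_neg at h
    exact hne (funext h)
  have h0 : φ 0 = 1 := by
    have := hd x₀ 0
    simp at this
    have h2 : φ x₀ * φ 0 = φ x₀ * 1 := by rw [this]; ring
    exact mul_left_cancel₀ hx₀ h2
  set M := ⨆ x, ‖φ x‖ with hM
  have hbdd : BddAbove (Set.range fun x => ‖φ x‖) := ⟨C, by rintro _ ⟨x, rfl⟩; exact hC x⟩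
  have hle : ∀ x, ‖φ x‖ ≤ M := fun x => le_ciSup hbdd x
  have hM0 : 0 ≤ M := le_trans (norm_nonneg _) (hle 0)
  have key : ∀ x, ‖φ x‖ ^ 2 ≤ (M + 1) / 2 := by
    intro x
    have := hd x x
    simp [h0] at this
    calc ‖φ x‖ ^ 2 = ‖φ x * φ x‖ := by rw [norm_mul]; ring
      _ = ‖(φ (x + x) + 1) / 2‖ := by rw [this]
      _ ≤ (‖φ (x + x)‖ + ‖(1:ℂ)‖) / 2 := by
          rw [norm_div]
          simp only [Complex.norm_ofNat]
          gcongr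
          exact norm_add_le _ _
      _ ≤ (M + 1) / 2 := by simp; gcongr; exact hle _
  have hM2 : M ^ 2 ≤ (M + 1) / 2 := by
    have : ∀ x, ‖φ x‖ ≤ Real.sqrt ((M + 1) / 2) := by
      intro x
      have := key x
      nlinarith [Real.sq_sqrt (by linarith : (0:ℝ) ≤ (M+1)/2), Real.sqrt_nonneg ((M+1)/2),
        norm_nonneg (φ x)]
    have hMs : M ≤ Real.sqrt ((M + 1) / 2) := ciSup_le this
    nlinarith [Real.sq_sqrt (by linarith : (0:ℝ) ≤ (M+1)/2), Real.sqrt_nonneg ((M+1)/2)]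
  have : M ≤ 1 := by nlinarith
  exact fun x => le_trans (hle x) this


lemma exists_isCompact_setIntegral_norm_compl_lt
    {G : Type*} [TopologicalSpace G] [T2Space G] [MeasurableSpace G] [BorelSpace G]
    (μ : Measure G) [μ.InnerRegularCompactLTTop]
    (f : G → ℂ) (hf : Integrable f μ) {ε : ℝ} (hε : 0 < ε) :
    ∃ K : Set G, IsCompact K ∧ ∫ x in Kᶜ, ‖f x‖ ∂μ < ε := by
  have hmeas := hf.aestronglyMeasurable.enorm
  set g : G → ℝ≥0∞ := hmeas.mk _ with hgdef
  have gmeas : Measurable g := hmeas.measurable_mk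
  have hfg : (fun x => (‖f x‖₊ : ℝ≥0∞)) =ᵐ[μ] g := hmeas.ae_eq_mk
  set T := ∫⁻ x, g x ∂μ with hT
  have hTfin : T < ⊤ := by
    rw [hT, ← lintegral_congr_ae hfg]
    exact hf.2
  have hTne : T ≠ ⊤ := hTfin.ne
  set e : ℝ≥0∞ := ENNReal.ofReal ε / 2 with he
  have he0 : e ≠ 0 := by
    simp [he, ENNReal.div_eq_zero_iff, ENNReal.ofReal_eq_zero]
    linarith
  -- sets where g is not small
  set A : ℕ → Set G := fun n => {x | ((n : ℝ≥0∞) + 1)⁻¹ ≤ g x} with hA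
  have hAmeas : ∀ n, MeasurableSet (A n) := fun n =>
    measurableSet_le measurable_const gmeas
  have hAfin : ∀ n, μ (A n) ≠ ⊤ := by
    intro n
    have hc0 : ((n : ℝ≥0∞) + 1)⁻¹ ≠ 0 :=
      ENNReal.inv_ne_zero.mpr (ENNReal.add_ne_top.mpr ⟨ENNReal.natCast_ne_top n, one_ne_top⟩)
    have hct : ((n : ℝ≥0∞) + 1)⁻¹ ≠ ⊤ := by
      simp
    have := meas_ge_le_lintegral_div (μ := μ) gmeas.aemeasurable hc0 hct
    exact ne_top_of_le_ne_top (ENNReal.div_lt_top hTne hc0).ne this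
  -- sup of integrals over A n is the total integral
  have hsup : ⨆ n, ∫⁻ x in A n, g x ∂μ = T := by
    have hmono : Monotone fun n => (A n).indicator g := by
      intro m n hmn x
      refine Set.indicator_le_indicator_of_subset ?_ (fun _ => zero_le) x
      intro y hy
      simp only [hA, Set.mem_setOf_eq] at hy ⊢
      have hmn' : ((m : ℝ≥0∞) + 1) ≤ ((n : ℝ≥0∞) + 1) :=
        add_le_add_left (by exact_mod_cast hmn) 1
      exact le_trans (ENNReal.inv_le_inv.mpr hmn') hy
    have hcov : ∀ x, (⨆ n, (A n).indicator g x) = g x := by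
      intro x
      rcases eq_or_ne (g x) 0 with h0 | h0
      · rw [h0]
        simp only [ENNReal.iSup_eq_zero]
        intro n
        rcases em (x ∈ A n) with h | h
        · simp [Set.indicator_of_mem h, h0]
        · simp [Set.indicator_of_notMem h]
      · obtain ⟨n, hn⟩ := ENNReal.exists_inv_nat_lt h0
        apply le_antisymm
        · exact iSup_le fun m => Set.indicator_le_self _ _ x
        · have hxA : x ∈ A n := by
            have : ((n : ℝ≥0∞) + 1)⁻¹ ≤ (n : ℝ≥0∞)⁻¹ := by gcongr; exact le_self_add
            exact le_trans this hn.le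
          calc g x = (A n).indicator g x := (Set.indicator_of_mem hxA g).symm
            _ ≤ ⨆ m, (A m).indicator g x := le_iSup (fun m => (A m).indicator g x) n
    calc ⨆ n, ∫⁻ x in A n, g x ∂μ = ⨆ n, ∫⁻ x, (A n).indicator g x ∂μ := by
          simp_rw [lintegral_indicator (hAmeas _)]
      _ = ∫⁻ x, ⨆ n, (A n).indicator g x ∂μ :=
          (lintegral_iSup (fun n => gmeas.indicator (hAmeas n)) hmono).symm
      _ = T := by rw [hT]; exact lintegral_congr fun x => hcov x
  -- choose n with small tail
  obtain ⟨n, hn⟩ : ∃ n, ∫⁻ x in (A n)ᶜ, g x ∂μ < e := by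
    rcases eq_or_ne T 0 with hT0 | hT0
    · refine ⟨0, lt_of_le_of_lt ?_ (pos_iff_ne_zero.mpr he0)⟩
      calc ∫⁻ x in (A 0)ᶜ, g x ∂μ ≤ T := by
            rw [hT]; exact lintegral_mono' Measure.restrict_le_self le_rfl
        _ = 0 := hT0
    · have hTe : T - e < T := ENNReal.sub_lt_self hTne hT0 he0
      have hTe' : T - e < ⨆ n, ∫⁻ x in A n, g x ∂μ := by rw [hsup]; exact hTe
      obtain ⟨n, hn⟩ := lt_iSup_iff.mp hTe'
      refine ⟨n, ?_⟩
      have hadd : (∫⁻ x in A n, g x ∂μ) + ∫⁻ x in (A n)ᶜ, g x ∂μ = T :=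
        lintegral_add_compl g (hAmeas n)
      by_contra hcon
      push_neg at hcon
      have : (∫⁻ x in A n, g x ∂μ) + e ≤ T := by
        calc (∫⁻ x in A n, g x ∂μ) + e ≤ (∫⁻ x in A n, g x ∂μ) + ∫⁻ x in (A n)ᶜ, g x ∂μ := by
              gcongr
          _ = T := hadd
      have hle := ENNReal.le_sub_of_add_le_right
        ((ENNReal.div_lt_top ENNReal.ofReal_ne_top (by norm_num)).ne) this
      exact absurd hn (not_lt.mpr hle)
  -- absolute continuity
  obtain ⟨δ, hδ0, hδ⟩ := exists_pos_setLIntegral_lt_of_measure_lt (μ := μ) (f := g) hTne he0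
  -- inner regularity
  obtain ⟨K, hKA, hK, hKd⟩ := (hAmeas n).exists_isCompact_diff_lt (hAfin n) hδ0.ne'
  refine ⟨K, hK, ?_⟩
  have hsubset : Kᶜ ⊆ (A n)ᶜ ∪ (A n \ K) := by
    intro x hx
    rcases em (x ∈ A n) with h | h
    · exact Or.inr ⟨h, hx⟩
    · exact Or.inl h
  have hlint : ∫⁻ x in Kᶜ, g x ∂μ < ENNReal.ofReal ε := by
    calc ∫⁻ x in Kᶜ, g x ∂μ ≤ ∫⁻ x in (A n)ᶜ ∪ (A n \ K), g x ∂μ :=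
          lintegral_mono_set hsubset
      _ ≤ (∫⁻ x in (A n)ᶜ, g x ∂μ) + ∫⁻ x in A n \ K, g x ∂μ := lintegral_union_le _ _ _
      _ < e + e := ENNReal.add_lt_add hn (hδ _ hKd)
      _ = ENNReal.ofReal ε := ENNReal.add_halves _
  have hre : ∫ x in Kᶜ, ‖f x‖ ∂μ = (∫⁻ x in Kᶜ, g x ∂μ).toReal := by
    rw [integral_norm_eq_lintegral_enorm (hf.aestronglyMeasurable.restrict)]
    congr 1
    exact lintegral_congr_ae (ae_restrict_of_ae hfg)
  rw [hre]
  exact ENNReal.toReal_lt_of_lt_ofReal hlint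


/-- The cosine class `COS(G)`: nonzero bounded continuous `φ : G → ℂ` satisfying the
d'Alembert equation `φ(x) φ(y) = (φ(x+y) + φ(x-y))/2`. -/
def CosClass (G : Type*) [AddCommGroup G] [TopologicalSpace G] : Set (G → ℂ) :=
  {φ | Continuous φ ∧ (∃ C, ∀ x, ‖φ x‖ ≤ C) ∧ φ ≠ 0 ∧
    ∀ x y, φ x * φ y = (φ (x + y) + φ (x - y)) / 2}

set_option maxHeartbeats 1000000 in
/-- For `f ∈ L¹(G, μ)`, the map `φ ↦ ∫ f(x) φ(x) dμ(x)` is continuous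
on `COS(G)` regarded as a subspace of `C(G, ℂ)` with the compact-open topology
(the topology of uniform convergence on compact sets). -/
theorem continuous_integral_on_cosClass {G : Type*} [AddCommGroup G] [TopologicalSpace G]
    [IsTopologicalAddGroup G] [LocallyCompactSpace G] [T2Space G]
    [MeasurableSpace G] [BorelSpace G]
    (μ : Measure G) [μ.IsAddHaarMeasure] [μ.Regular]
    (f : G → ℂ) (hf : Integrable f μ) :
    Continuous (fun φ : {ψ : C(G, ℂ) // ⇑ψ ∈ CosClass G} =>
      ∫ x, f x * (φ : C(G, ℂ)) x ∂μ) := by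
  rw [continuous_iff_continuousAt]
  intro φ₀
  have hnorm : ∀ (φ : {ψ : C(G, ℂ) // ⇑ψ ∈ CosClass G}) (x : G), ‖(φ : C(G,ℂ)) x‖ ≤ 1 :=
    fun φ x => cos_norm_le_one _ φ.2.2.1 φ.2.2.2.1 φ.2.2.2.2 x
  have hint : ∀ (φ : {ψ : C(G, ℂ) // ⇑ψ ∈ CosClass G}),
      Integrable (fun x => f x * (φ : C(G,ℂ)) x) μ := by
    intro φ
    have := hf.bdd_mul ((φ : C(G,ℂ)).continuous.aestronglyMeasurable) (Filter.Eventually.of_forall (hnorm φ))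
    simpa [mul_comm] using this
  rw [ContinuousAt, Metric.tendsto_nhds]
  intro ε hε
  obtain ⟨K, hK, hKtail⟩ :=
    exists_isCompact_setIntegral_norm_compl_lt μ f hf (show (0:ℝ) < ε/8 by positivity)
  have hKm : MeasurableSet K := hK.isClosed.measurableSet
  set I := ∫ x, ‖f x‖ ∂μ with hI
  have hI0 : 0 ≤ I := integral_nonneg fun x => norm_nonneg _
  set δ : ℝ := ε / (4 * (I + 1)) with hδ
  have hδ0 : 0 < δ := by positivity
  have hco : Tendsto (fun φ : {ψ : C(G, ℂ) // ⇑ψ ∈ CosClass G} => (φ : C(G,ℂ)))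
      (𝓝 φ₀) (𝓝 (φ₀ : C(G,ℂ))) := continuous_subtype_val.continuousAt
  have huc := ContinuousMap.tendsto_iff_forall_isCompact_tendstoUniformlyOn.mp hco K hK
  have hev := Metric.tendstoUniformlyOn_iff.mp huc δ hδ0
  filter_upwards [hev] with φ hφ
  have hsub : Integrable (fun x => f x * ((φ : C(G,ℂ)) x - (φ₀ : C(G,ℂ)) x)) μ := by
    have := (hint φ).sub (hint φ₀)
    simpa [mul_sub, Pi.sub_def] using this
  have heq : dist (∫ x, f x * (φ : C(G,ℂ)) x ∂μ) (∫ x, f x * (φ₀ : C(G,ℂ)) x ∂μ)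
      = ‖∫ x, f x * ((φ : C(G,ℂ)) x - (φ₀ : C(G,ℂ)) x) ∂μ‖ := by
    rw [dist_eq_norm, ← integral_sub (hint φ) (hint φ₀)]
    congr 1
    apply integral_congr_ae
    filter_upwards with x
    ring
  rw [heq]
  set h : G → ℝ := fun x => ‖f x‖ * ‖(φ : C(G,ℂ)) x - (φ₀ : C(G,ℂ)) x‖ with hh
  have hh_int : Integrable h μ := by
    have := hsub.norm
    simpa [hh, norm_mul] using this
  have hnle : ‖∫ x, f x * ((φ : C(G,ℂ)) x - (φ₀ : C(G,ℂ)) x) ∂μ‖ ≤ ∫ x, h x ∂μ := by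
    refine le_trans (norm_integral_le_integral_norm _) (le_of_eq ?_)
    apply integral_congr_ae
    filter_upwards with x
    simp [hh, norm_mul]
  have hsplit : ∫ x, h x ∂μ = (∫ x in K, h x ∂μ) + ∫ x in Kᶜ, h x ∂μ :=
    (integral_add_compl hKm hh_int).symm
  have hbK : ∫ x in K, h x ∂μ ≤ δ * I := by
    have h1 : ∫ x in K, h x ∂μ ≤ ∫ x in K, δ * ‖f x‖ ∂μ := by
      apply setIntegral_mono_on hh_int.integrableOn (hf.norm.const_mul δ).integrableOn hKm
      intro x hx
      have hd : ‖(φ : C(G,ℂ)) x - (φ₀ : C(G,ℂ)) x‖ ≤ δ := by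
        rw [← dist_eq_norm, dist_comm]
        exact (hφ x hx).le
      calc h x ≤ ‖f x‖ * δ := mul_le_mul_of_nonneg_left hd (norm_nonneg _)
        _ = δ * ‖f x‖ := mul_comm _ _
    have h2 : ∫ x in K, δ * ‖f x‖ ∂μ = δ * ∫ x in K, ‖f x‖ ∂μ := integral_const_mul _ _
    have h3 : ∫ x in K, ‖f x‖ ∂μ ≤ I :=
      setIntegral_le_integral hf.norm (Filter.Eventually.of_forall fun x => norm_nonneg _)
    calc ∫ x in K, h x ∂μ ≤ δ * ∫ x in K, ‖f x‖ ∂μ := by rw [← h2]; exact h1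
      _ ≤ δ * I := mul_le_mul_of_nonneg_left h3 hδ0.le
  have hbKc : ∫ x in Kᶜ, h x ∂μ ≤ 2 * (ε/8) := by
    have h1 : ∫ x in Kᶜ, h x ∂μ ≤ ∫ x in Kᶜ, 2 * ‖f x‖ ∂μ := by
      apply setIntegral_mono_on hh_int.integrableOn
        (hf.norm.const_mul 2).integrableOn hKm.compl
      intro x _
      have hφb : ‖(φ : C(G,ℂ)) x - (φ₀ : C(G,ℂ)) x‖ ≤ 2 := by
        calc ‖(φ : C(G,ℂ)) x - (φ₀ : C(G,ℂ)) x‖ ≤ ‖(φ : C(G,ℂ)) x‖ + ‖(φ₀ : C(G,ℂ)) x‖ :=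
          norm_sub_le _ _
          _ ≤ 1 + 1 := add_le_add (hnorm φ x) (hnorm φ₀ x)
          _ = 2 := by norm_num
      calc h x ≤ ‖f x‖ * 2 := mul_le_mul_of_nonneg_left hφb (norm_nonneg _)
        _ = 2 * ‖f x‖ := mul_comm _ _
    have h2 : ∫ x in Kᶜ, 2 * ‖f x‖ ∂μ = 2 * ∫ x in Kᶜ, ‖f x‖ ∂μ := integral_const_mul _ _
    calc ∫ x in Kᶜ, h x ∂μ ≤ 2 * ∫ x in Kᶜ, ‖f x‖ ∂μ := by rw [← h2]; exact h1
      _ ≤ 2 * (ε/8) := mul_le_mul_of_nonneg_left hKtail.le (by norm_num)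
  have hδI : δ * I < ε / 2 := by
    rw [hδ]
    rw [div_mul_eq_mul_div, div_lt_div_iff₀ (by positivity) (by norm_num)]
    nlinarith
  calc ‖∫ x, f x * ((φ : C(G,ℂ)) x - (φ₀ : C(G,ℂ)) x) ∂μ‖ ≤ ∫ x, h x ∂μ := hnle
    _ = (∫ x in K, h x ∂μ) + ∫ x in Kᶜ, h x ∂μ := hsplit
    _ ≤ δ * I + 2 * (ε/8) := add_le_add hbK hbKc
    _ < ε/2 + ε/4 := by linarith
    _ < ε := by linarith
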